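/- arXiv:math/0309150 — 5 statements merged into one kernel-verified Lean document; each statement's English description precedes it below -/
import Mathlib

section
/- Let p be an odd prime and define θ_p : ℤ³ → ℤ by θ_p(x1,x2,x3) = (x1−x2)·(((2x3−x2)^p + x2^p − 2x3^p)/p), where the division by p is exact. If x1 ≡ x1', x2 ≡ x2', x3 ≡ x3' (mod p), then θ_p(x1,x2,x3) ≡ θ_p(x1',x2',x3') (mod p); that is, θ_p descends to a well-defined map (ℤ/pℤ)³ → ℤ/pℤ. -/
/-- Mochizuki's 3-cocycle on the integers: 
`θ_p(x1,x2,x3) = (x1 - x2) * (((2x3 - x2)^p + x2^p - 2x3^p) / p)`,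
where the division by `p` is exact. -/
def mochizukiTheta (p : ℕ) (x1 x2 x3 : ℤ) : ℤ :=
  (x1 - x2) * (((2 * x3 - x2) ^ p + x2 ^ p - 2 * x3 ^ p) / (p : ℤ))

/-- If `x1 ≡ x1'`, `x2 ≡ x2'`, `x3 ≡ x3'` (mod `p`) for an odd prime `p`, then
`θ_p(x1,x2,x3) ≡ θ_p(x1',x2',x3')` (mod `p`); i.e. `θ_p` descends to a well-defined
map `(ℤ/pℤ)³ → ℤ/pℤ`. -/
theorem stmt_1 (p : ℕ) (hp : p.Prime) (hodd : Odd p)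
    (x1 x2 x3 x1' x2' x3' : ℤ)
    (h1 : x1 ≡ x1' [ZMOD (p : ℤ)]) (h2 : x2 ≡ x2' [ZMOD (p : ℤ)])
    (h3 : x3 ≡ x3' [ZMOD (p : ℤ)]) :
    mochizukiTheta p x1 x2 x3 ≡ mochizukiTheta p x1' x2' x3' [ZMOD (p : ℤ)] := by
  haveI : Fact p.Prime := ⟨hp⟩
  have hp0 : (p : ℤ) ≠ 0 := Int.natCast_ne_zero.mpr hp.ne_zero
  -- exact divisibility from Fermat's little theorem
  have key : ∀ b c : ℤ, (p : ℤ) ∣ (2 * c - b) ^ p + b ^ p - 2 * c ^ p := by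
    intro b c
    rw [← ZMod.intCast_zmod_eq_zero_iff_dvd]
    push_cast
    rw [ZMod.pow_card, ZMod.pow_card, ZMod.pow_card]
    ring
  obtain ⟨m, hm⟩ := key x2 x3
  obtain ⟨m', hm'⟩ := key x2' x3'
  -- p^2 divides a^p - b^p whenever a ≡ b mod p
  have hsq : ∀ a b : ℤ, a ≡ b [ZMOD (p : ℤ)] → (p : ℤ) ^ 2 ∣ a ^ p - b ^ p := by
    intro a b hab
    have hd : (p : ℤ) ∣ a - b := (dvd_sub_comm).mp hab.dvd
    have := dvd_sub_pow_of_dvd_sub (p := p) (a := a) (b := b) hd 1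
    simpa [pow_one] using this
  have hA : (2 * x3 - x2) ≡ (2 * x3' - x2') [ZMOD (p : ℤ)] :=
    (Int.ModEq.mul_left 2 h3).sub h2
  have d1 := hsq _ _ hA
  have d2 := hsq _ _ h2
  have d3 := hsq _ _ h3
  have dsum : (p : ℤ) ^ 2 ∣ (p : ℤ) * m - (p : ℤ) * m' := by
    rw [← hm, ← hm']
    have : ((2 * x3 - x2) ^ p + x2 ^ p - 2 * x3 ^ p) -
        ((2 * x3' - x2') ^ p + x2' ^ p - 2 * x3' ^ p) =
        ((2 * x3 - x2) ^ p - (2 * x3' - x2') ^ p) + (x2 ^ p - x2' ^ p)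
          - 2 * (x3 ^ p - x3' ^ p) := by ring
    rw [this]
    exact ((d1.add d2).sub (d3.mul_left 2))
  have hmm' : (p : ℤ) ∣ m - m' := by
    have h := dsum
    rw [sq, ← mul_sub] at h
    exact (mul_dvd_mul_iff_left hp0).mp h
  have hmdiv : ((2 * x3 - x2) ^ p + x2 ^ p - 2 * x3 ^ p) / (p : ℤ) = m := by
    rw [hm, Int.mul_ediv_cancel_left _ hp0]
  have hmdiv' : ((2 * x3' - x2') ^ p + x2' ^ p - 2 * x3' ^ p) / (p : ℤ) = m' := by
    rw [hm', Int.mul_ediv_cancel_left _ hp0]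
  unfold mochizukiTheta
  rw [hmdiv, hmdiv']
  exact (h1.sub h2).mul (Int.modEq_iff_dvd.mpr (dvd_sub_comm.mp hmm'))
end

section
/- Let p be an odd prime and define θ_p : ℤ³ → ℤ by θ_p(x1,x2,x3) = (x1−x2)·(((2x3−x2)^p + x2^p − 2x3^p)/p), where the division by p is exact. Then θ_p is a quandle 3-cocycle of the dihedral quandle modulo p: (i) θ_p(x1,x2,x3) ≡ 0 (mod p) whenever x1 = x2 or x2 = x3; and (ii) for all integers x1,x2,x3,x4, θ_p(x1,x3,x4) − θ_p(x1,x2,x4) + θ_p(x1,x2,x3) ≡ θ_p(2x2−x1, x3, x4) − θ_p(2x3−x1, 2x3−x2, x4) + θ_p(2x4−x1, 2x4−x2, 2x4−x3) (mod p). -/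
/-- Key divisibility: the numerator of `θ_p` is divisible by `p`, by Fermat's
little theorem. -/
lemma mochizuki_dvd (p : ℕ) (hp : p.Prime) (a b : ℤ) :
    (p : ℤ) ∣ (2 * b - a) ^ p + a ^ p - 2 * b ^ p := by
  haveI : Fact p.Prime := ⟨hp⟩
  rw [← ZMod.intCast_zmod_eq_zero_iff_dvd ((2 * b - a) ^ p + a ^ p - 2 * b ^ p) p]
  push_cast
  rw [ZMod.pow_card, ZMod.pow_card, ZMod.pow_card]
  ring

/-- `θ_p` is a quandle 3-cocycle of the dihedral quandle `R_p` (with operation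
`x * y = 2y - x`) with coefficients in `ℤ/pℤ`:
(i) `θ_p(x1,x2,x3) ≡ 0 (mod p)` whenever `x1 = x2` or `x2 = x3`, and
(ii) the 3-cocycle identity holds modulo `p`. -/
theorem stmt_2 (p : ℕ) (hp : p.Prime) (hodd : Odd p) :
    (∀ x1 x2 x3 : ℤ, (x1 = x2 ∨ x2 = x3) → mochizukiTheta p x1 x2 x3 ≡ 0 [ZMOD (p : ℤ)]) ∧
    (∀ x1 x2 x3 x4 : ℤ,
      mochizukiTheta p x1 x3 x4 - mochizukiTheta p x1 x2 x4 + mochizukiTheta p x1 x2 x3 ≡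
        mochizukiTheta p (2 * x2 - x1) x3 x4
          - mochizukiTheta p (2 * x3 - x1) (2 * x3 - x2) x4
          + mochizukiTheta p (2 * x4 - x1) (2 * x4 - x2) (2 * x4 - x3) [ZMOD (p : ℤ)]) := by
  have hp0 : (p : ℤ) ≠ 0 := Int.natCast_ne_zero.mpr hp.ne_zero
  constructor
  · rintro x1 x2 x3 (rfl | rfl)
    · have : mochizukiTheta p x1 x1 x3 = 0 := by
        simp [mochizukiTheta]
      rw [this]
    · have hnum : (2 * x2 - x2) ^ p + x2 ^ p - 2 * x2 ^ p = 0 := by ring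
      have : mochizukiTheta p x1 x2 x2 = 0 := by
        simp [mochizukiTheta, hnum]
      rw [this]
  · intro x1 x2 x3 x4
    obtain ⟨q1, h1⟩ := mochizuki_dvd p hp x3 x4
    obtain ⟨q2, h2⟩ := mochizuki_dvd p hp x2 x4
    obtain ⟨q3, h3⟩ := mochizuki_dvd p hp x2 x3
    obtain ⟨q4, h4⟩ := mochizuki_dvd p hp (2 * x3 - x2) x4
    obtain ⟨q5, h5⟩ := mochizuki_dvd p hp (2 * x4 - x2) (2 * x4 - x3)
    have key : (p : ℤ) * (2 * q1 + q3 + q5) = p * (q2 + q4) := by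
      linear_combination h2 + h4 - (2 : ℤ) * h1 - h3 - h5
    have hq : 2 * q1 + q3 + q5 = q2 + q4 := mul_left_cancel₀ hp0 key
    have heq : mochizukiTheta p x1 x3 x4 - mochizukiTheta p x1 x2 x4 +
        mochizukiTheta p x1 x2 x3 =
        mochizukiTheta p (2 * x2 - x1) x3 x4
          - mochizukiTheta p (2 * x3 - x1) (2 * x3 - x2) x4
          + mochizukiTheta p (2 * x4 - x1) (2 * x4 - x2) (2 * x4 - x3) := by
      unfold mochizukiTheta
      rw [h1, h2, h3, h4, h5, Int.mul_ediv_cancel_left _ hp0, Int.mul_ediv_cancel_left _ hp0,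
        Int.mul_ediv_cancel_left _ hp0, Int.mul_ediv_cancel_left _ hp0,
        Int.mul_ediv_cancel_left _ hp0]
      linear_combination (x1 - x2) * hq
    rw [heq]
end

section
/- Let A be an (additive) abelian group and let φ be a function assigning to each ordered pair of 4-cycles of S₄ an element of A, satisfying the quandle 2-cocycle identity: for all 4-cycles a, b, c in S₄, φ(a,c) − φ(a,b) − φ(b⁻¹ab, c) + φ(c⁻¹ac, c⁻¹bc) = 0. Then φ(a, a⁻¹) is constant: for all 4-cycles a and b in S₄, φ(a, a⁻¹) = φ(b, b⁻¹). -/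
/-- A permutation of four letters is a 4-cycle iff its cycle type is a single
cycle of length 4. -/
def IsFourCycle (a : Equiv.Perm (Fin 4)) : Prop := a.cycleType = {4}

set_option maxRecDepth 10000 in
lemma fourCycle_conj_connected : ∀ a b : Equiv.Perm (Fin 4),
    a.cycleType = {4} → b.cycleType = {4} →
    ∃ c₁ c₂ : Equiv.Perm (Fin 4), c₁.cycleType = {4} ∧ c₂.cycleType = {4} ∧
      c₂⁻¹ * (c₁⁻¹ * a * c₁) * c₂ = b := by decide

lemma isFourCycle_conj {a c : Equiv.Perm (Fin 4)} (ha : IsFourCycle a) :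
    IsFourCycle (c⁻¹ * a * c) := by
  unfold IsFourCycle at *
  have : c⁻¹ * a * c = c⁻¹ * a * c⁻¹⁻¹ := by group
  rw [this, Equiv.Perm.cycleType_conj, ha]

lemma isFourCycle_inv {a : Equiv.Perm (Fin 4)} (ha : IsFourCycle a) :
    IsFourCycle a⁻¹ := by
  unfold IsFourCycle at *
  rw [Equiv.Perm.cycleType_inv, ha]

/-- If `φ`, defined on ordered pairs of 4-cycles of `S₄` with values in an abelian
group `A`, satisfies the quandle 2-cocycle identity
`φ(a,c) - φ(a,b) - φ(a*b,c) + φ(a*c,b*c) = 0` (where `a*b = b⁻¹ab`),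
then `φ(a,a⁻¹)` is constant. -/
theorem stmt_4 (A : Type*) [AddCommGroup A]
    (φ : Equiv.Perm (Fin 4) → Equiv.Perm (Fin 4) → A)
    (hcocycle : ∀ a b c : Equiv.Perm (Fin 4),
      IsFourCycle a → IsFourCycle b → IsFourCycle c →
      φ a c - φ a b - φ (b⁻¹ * a * b) c + φ (c⁻¹ * a * c) (c⁻¹ * b * c) = 0) :
    ∀ a b : Equiv.Perm (Fin 4), IsFourCycle a → IsFourCycle b →
      φ a a⁻¹ = φ b b⁻¹ := by
  have key : ∀ a c : Equiv.Perm (Fin 4), IsFourCycle a → IsFourCycle c →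
      φ a a⁻¹ = φ (c⁻¹ * a * c) (c⁻¹ * a * c)⁻¹ := by
    intro a c ha hc
    have h := hcocycle a a⁻¹ c ha (isFourCycle_inv ha) hc
    have e1 : a⁻¹⁻¹ * a * a⁻¹ = a := by group
    have e2 : (c⁻¹ * a * c)⁻¹ = c⁻¹ * a⁻¹ * c := by group
    rw [e1, ← e2] at h
    have h2 : φ (c⁻¹ * a * c) (c⁻¹ * a * c)⁻¹ - φ a a⁻¹ = 0 := by
      rw [← h]; abel
    exact (sub_eq_zero.mp h2).symm
  intro a b ha hb
  obtain ⟨c₁, c₂, hc₁, hc₂, heq⟩ := fourCycle_conj_connected a b ha hb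
  calc φ a a⁻¹ = φ (c₁⁻¹ * a * c₁) (c₁⁻¹ * a * c₁)⁻¹ := key a c₁ ha hc₁
    _ = φ (c₂⁻¹ * (c₁⁻¹ * a * c₁) * c₂) (c₂⁻¹ * (c₁⁻¹ * a * c₁) * c₂)⁻¹ :=
        key _ c₂ (isFourCycle_conj ha) hc₂
    _ = φ b b⁻¹ := by rw [heq]
end

section
/- Label the six 4-cycles of S₄ as e1 = (1234), e2 = (1423), e3 = (1342), e4 = (1432), e5 = (1324), e6 = (1243), so e1⁻¹ = e4, e2⁻¹ = e5, e3⁻¹ = e6. Define φ : Q6 × Q6 → ℤ/4ℤ by: φ(a,a) = 0 and φ(a,a⁻¹) = 1 for every a ∈ Q6; φ(e1,e3) = φ(e2,e1) = φ(e2,e3) = φ(e3,e1) = φ(e3,e5) = φ(e5,e1) = φ(e5,e6) = φ(e6,e1) = φ(e6,e2) = φ(e6,e5) = 1; φ(e1,e5) = φ(e5,e3) = 2; φ(e1,e6) = φ(e3,e2) = 3; and φ(a,b) = 0 in all remaining cases. Then φ is a quandle 2-cocycle of Q6 with coefficients in ℤ/4ℤ: φ(a,a) = 0 for all a ∈ Q6,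 and φ(a,c) − φ(a,b) − φ(b⁻¹ab, c) + φ(c⁻¹ac, c⁻¹bc) = 0 for all a, b, c ∈ Q6. -/
/- The six 4-cycles of `S₄`, acting on `Fin 4 = {0,1,2,3}` (the letters `1,2,3,4`
of the paper correspond to `0,1,2,3`). -/
/-- `e1 = (1234)` -/
def e1 : Equiv.Perm (Fin 4) := c[0, 1, 2, 3]
/-- `e2 = (1423)` -/
def e2 : Equiv.Perm (Fin 4) := c[0, 3, 1, 2]
/-- `e3 = (1342)` -/
def e3 : Equiv.Perm (Fin 4) := c[0, 2, 3, 1]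
/-- `e4 = (1432)` -/
def e4 : Equiv.Perm (Fin 4) := c[0, 3, 2, 1]
/-- `e5 = (1324)` -/
def e5 : Equiv.Perm (Fin 4) := c[0, 2, 1, 3]
/-- `e6 = (1243)` -/
def e6 : Equiv.Perm (Fin 4) := c[0, 1, 3, 2]

/-- The specific quandle 2-cocycle `φ : Q6 × Q6 → ℤ/4ℤ` given by the table:
`φ(a,a) = 0` and `φ(a,a⁻¹) = 1` for every `a ∈ Q6`;
`φ(e1,e3) = φ(e2,e1) = φ(e2,e3) = φ(e3,e1) = φ(e3,e5) = φ(e5,e1) = φ(e5,e6)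
  = φ(e6,e1) = φ(e6,e2) = φ(e6,e5) = 1`;
`φ(e1,e5) = φ(e5,e3) = 2`; `φ(e1,e6) = φ(e3,e2) = 3`; and `φ(a,b) = 0` otherwise. -/
def phi (a b : Equiv.Perm (Fin 4)) : ZMod 4 :=
  if a = b then 0
  else if b = a⁻¹ then 1
  else if (a, b) = (e1, e3) ∨ (a, b) = (e2, e1) ∨ (a, b) = (e2, e3) ∨
          (a, b) = (e3, e1) ∨ (a, b) = (e3, e5) ∨ (a, b) = (e5, e1) ∨
          (a, b) = (e5, e6) ∨ (a, b) = (e6, e1) ∨ (a, b) = (e6, e2) ∨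
          (a, b) = (e6, e5) then 1
  else if (a, b) = (e1, e5) ∨ (a, b) = (e5, e3) then 2
  else if (a, b) = (e1, e6) ∨ (a, b) = (e3, e2) then 3
  else 0

/-- The quandle operation `a * b = b⁻¹ab` of the paper.  The paper composes
permutations left-to-right (it computes `(1342)*(1234) = (1324)`), so its
conjugation `b⁻¹ab` is `b * a * b⁻¹` in Mathlib's right-to-left composition
convention for `Equiv.Perm`. -/
def quandleOp (a b : Equiv.Perm (Fin 4)) : Equiv.Perm (Fin 4) := b * a * b⁻¹

instance : DecidablePred IsFourCycle :=
  fun a => inferInstanceAs (Decidable (a.cycleType = {4}))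

set_option maxRecDepth 100000 in
/-- `φ` is a quandle 2-cocycle of the conjugation quandle `Q6` of 4-cycles in `S₄`
with coefficients in `ℤ/4ℤ`: `φ(a,a) = 0` for all `a ∈ Q6` and
`φ(a,c) − φ(a,b) − φ(b⁻¹ab, c) + φ(c⁻¹ac, c⁻¹bc) = 0` for all `a, b, c ∈ Q6`
(conjugation written in the paper's left-to-right composition convention, i.e.
`b⁻¹ab = quandleOp a b`). -/
theorem stmt_5 :
    (∀ a : Equiv.Perm (Fin 4), IsFourCycle a → phi a a = 0) ∧
    (∀ a b c : Equiv.Perm (Fin 4), IsFourCycle a → IsFourCycle b → IsFourCycle c →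
      phi a c - phi a b - phi (quandleOp a b) c
        + phi (quandleOp a c) (quandleOp b c) = 0) := by
  constructor
  · intro a _; simp [phi]
  · decide
end

section
/- Let φ : Q6 × Q6 → ℤ/4ℤ be the specific quandle 2-cocycle defined by the table (with e1 = (1234), e2 = (1423), e3 = (1342), e4 = (1432), e5 = (1324), e6 = (1243)): φ(a,a) = 0 and φ(a,a⁻¹) = 1 for all a; φ(e1,e3) = φ(e2,e1) = φ(e2,e3) = φ(e3,e1) = φ(e3,e5) = φ(e5,e1) = φ(e5,e6) = φ(e6,e1) = φ(e6,e2) = φ(e6,e5) = 1; φ(e1,e5) = φ(e5,e3) = 2; φ(e1,e6) = φ(e3,e2) = 3; φ(a,b) = 0 otherwise. Let l be a natural number with l ≡ 3 (mod 6), and let a, b be 4-cycles in S₄ with b ≠ a and b ≠ a⁻¹. Then the total weight of the corresponding Q6-coloring of the (2,l)-torus braid, namely the sum over i = 0, 1, …, l−1 of φ applied to the i-th iterate of the half-twist map f(x,y) = (y, y⁻¹xy) starting from (a,b), equals l + 2 in ℤ/4ℤ. -/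
/-- The half-twist map `f(x,y) = (y, y⁻¹xy) = (y, x*y)`, describing how the colors
of the two strands of a braid change under one positive half twist.  The
conjugation `y⁻¹xy` is written in the paper's left-to-right composition
convention, i.e. it is `quandleOp x y = y * x * y⁻¹` in Mathlib's convention. -/
def halfTwist (p : Equiv.Perm (Fin 4) × Equiv.Perm (Fin 4)) :
    Equiv.Perm (Fin 4) × Equiv.Perm (Fin 4) :=
  (p.2, quandleOp p.1 p.2)

set_option maxRecDepth 20000 in
lemma four_iff : ∀ a : Equiv.Perm (Fin 4), a.cycleType = {4} ↔
    (a = e1 ∨ a = e2 ∨ a = e3 ∨ a = e4 ∨ a = e5 ∨ a = e6) := by decide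

lemma H12 : halfTwist (e1, e2) = (e2, e6) := by decide
lemma H13 : halfTwist (e1, e3) = (e3, e2) := by decide
lemma H15 : halfTwist (e1, e5) = (e5, e3) := by decide
lemma H16 : halfTwist (e1, e6) = (e6, e5) := by decide
lemma H21 : halfTwist (e2, e1) = (e1, e3) := by decide
lemma H23 : halfTwist (e2, e3) = (e3, e4) := by decide
lemma H24 : halfTwist (e2, e4) = (e4, e6) := by decide
lemma H26 : halfTwist (e2, e6) = (e6, e1) := by decide
lemma H31 : halfTwist (e3, e1) = (e1, e5) := by decide
lemma H32 : halfTwist (e3, e2) = (e2, e1) := by decide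
lemma H34 : halfTwist (e3, e4) = (e4, e2) := by decide
lemma H35 : halfTwist (e3, e5) = (e5, e4) := by decide
lemma H42 : halfTwist (e4, e2) = (e2, e3) := by decide
lemma H43 : halfTwist (e4, e3) = (e3, e5) := by decide
lemma H45 : halfTwist (e4, e5) = (e5, e6) := by decide
lemma H46 : halfTwist (e4, e6) = (e6, e2) := by decide
lemma H51 : halfTwist (e5, e1) = (e1, e6) := by decide
lemma H53 : halfTwist (e5, e3) = (e3, e1) := by decide
lemma H54 : halfTwist (e5, e4) = (e4, e3) := by decide
lemma H56 : halfTwist (e5, e6) = (e6, e4) := by decide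
lemma H61 : halfTwist (e6, e1) = (e1, e2) := by decide
lemma H62 : halfTwist (e6, e2) = (e2, e4) := by decide
lemma H64 : halfTwist (e6, e4) = (e4, e5) := by decide
lemma H65 : halfTwist (e6, e5) = (e5, e1) := by decide

lemma iterVals {p0 p1 p2 : Equiv.Perm (Fin 4) × Equiv.Perm (Fin 4)}
    (h1 : halfTwist p0 = p1) (h2 : halfTwist p1 = p2) (h3 : halfTwist p2 = p0) :
    halfTwist^[3] p0 = p0 ∧
      (∑ i ∈ Finset.range 3, phi (halfTwist^[i] p0).1 (halfTwist^[i] p0).2)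
        = phi p0.1 p0.2 + phi p1.1 p1.2 + phi p2.1 p2.2 := by
  have e0 : halfTwist^[0] p0 = p0 := rfl
  have e1 : halfTwist^[1] p0 = p1 := by rw [Function.iterate_one, h1]
  have e2 : halfTwist^[2] p0 = p2 := by
    rw [show (2:ℕ) = 1+1 from rfl, Function.iterate_succ_apply', e1, h2]
  have e3 : halfTwist^[3] p0 = p0 := by
    rw [show (3:ℕ) = 2+1 from rfl, Function.iterate_succ_apply', e2, h3]
  refine ⟨e3, ?_⟩
  rw [Finset.sum_range_succ, Finset.sum_range_succ, Finset.sum_range_one, e0, e1, e2]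

lemma K12 : halfTwist^[3] (e1, e2) = (e1, e2) ∧
    (∑ i ∈ Finset.range 3, phi (halfTwist^[i] (e1, e2)).1 (halfTwist^[i] (e1, e2)).2) = 1 :=
  ⟨(iterVals H12 H26 H61).1, (iterVals H12 H26 H61).2.trans (by decide)⟩
lemma K13 : halfTwist^[3] (e1, e3) = (e1, e3) ∧
    (∑ i ∈ Finset.range 3, phi (halfTwist^[i] (e1, e3)).1 (halfTwist^[i] (e1, e3)).2) = 1 :=
  ⟨(iterVals H13 H32 H21).1, (iterVals H13 H32 H21).2.trans (by decide)⟩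
lemma K15 : halfTwist^[3] (e1, e5) = (e1, e5) ∧
    (∑ i ∈ Finset.range 3, phi (halfTwist^[i] (e1, e5)).1 (halfTwist^[i] (e1, e5)).2) = 1 :=
  ⟨(iterVals H15 H53 H31).1, (iterVals H15 H53 H31).2.trans (by decide)⟩
lemma K16 : halfTwist^[3] (e1, e6) = (e1, e6) ∧
    (∑ i ∈ Finset.range 3, phi (halfTwist^[i] (e1, e6)).1 (halfTwist^[i] (e1, e6)).2) = 1 :=
  ⟨(iterVals H16 H65 H51).1, (iterVals H16 H65 H51).2.trans (by decide)⟩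
lemma K21 : halfTwist^[3] (e2, e1) = (e2, e1) ∧
    (∑ i ∈ Finset.range 3, phi (halfTwist^[i] (e2, e1)).1 (halfTwist^[i] (e2, e1)).2) = 1 :=
  ⟨(iterVals H21 H13 H32).1, (iterVals H21 H13 H32).2.trans (by decide)⟩
lemma K23 : halfTwist^[3] (e2, e3) = (e2, e3) ∧
    (∑ i ∈ Finset.range 3, phi (halfTwist^[i] (e2, e3)).1 (halfTwist^[i] (e2, e3)).2) = 1 :=
  ⟨(iterVals H23 H34 H42).1, (iterVals H23 H34 H42).2.trans (by decide)⟩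
lemma K24 : halfTwist^[3] (e2, e4) = (e2, e4) ∧
    (∑ i ∈ Finset.range 3, phi (halfTwist^[i] (e2, e4)).1 (halfTwist^[i] (e2, e4)).2) = 1 :=
  ⟨(iterVals H24 H46 H62).1, (iterVals H24 H46 H62).2.trans (by decide)⟩
lemma K26 : halfTwist^[3] (e2, e6) = (e2, e6) ∧
    (∑ i ∈ Finset.range 3, phi (halfTwist^[i] (e2, e6)).1 (halfTwist^[i] (e2, e6)).2) = 1 :=
  ⟨(iterVals H26 H61 H12).1, (iterVals H26 H61 H12).2.trans (by decide)⟩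
lemma K31 : halfTwist^[3] (e3, e1) = (e3, e1) ∧
    (∑ i ∈ Finset.range 3, phi (halfTwist^[i] (e3, e1)).1 (halfTwist^[i] (e3, e1)).2) = 1 :=
  ⟨(iterVals H31 H15 H53).1, (iterVals H31 H15 H53).2.trans (by decide)⟩
lemma K32 : halfTwist^[3] (e3, e2) = (e3, e2) ∧
    (∑ i ∈ Finset.range 3, phi (halfTwist^[i] (e3, e2)).1 (halfTwist^[i] (e3, e2)).2) = 1 :=
  ⟨(iterVals H32 H21 H13).1, (iterVals H32 H21 H13).2.trans (by decide)⟩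
lemma K34 : halfTwist^[3] (e3, e4) = (e3, e4) ∧
    (∑ i ∈ Finset.range 3, phi (halfTwist^[i] (e3, e4)).1 (halfTwist^[i] (e3, e4)).2) = 1 :=
  ⟨(iterVals H34 H42 H23).1, (iterVals H34 H42 H23).2.trans (by decide)⟩
lemma K35 : halfTwist^[3] (e3, e5) = (e3, e5) ∧
    (∑ i ∈ Finset.range 3, phi (halfTwist^[i] (e3, e5)).1 (halfTwist^[i] (e3, e5)).2) = 1 :=
  ⟨(iterVals H35 H54 H43).1, (iterVals H35 H54 H43).2.trans (by decide)⟩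
lemma K42 : halfTwist^[3] (e4, e2) = (e4, e2) ∧
    (∑ i ∈ Finset.range 3, phi (halfTwist^[i] (e4, e2)).1 (halfTwist^[i] (e4, e2)).2) = 1 :=
  ⟨(iterVals H42 H23 H34).1, (iterVals H42 H23 H34).2.trans (by decide)⟩
lemma K43 : halfTwist^[3] (e4, e3) = (e4, e3) ∧
    (∑ i ∈ Finset.range 3, phi (halfTwist^[i] (e4, e3)).1 (halfTwist^[i] (e4, e3)).2) = 1 :=
  ⟨(iterVals H43 H35 H54).1, (iterVals H43 H35 H54).2.trans (by decide)⟩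
lemma K45 : halfTwist^[3] (e4, e5) = (e4, e5) ∧
    (∑ i ∈ Finset.range 3, phi (halfTwist^[i] (e4, e5)).1 (halfTwist^[i] (e4, e5)).2) = 1 :=
  ⟨(iterVals H45 H56 H64).1, (iterVals H45 H56 H64).2.trans (by decide)⟩
lemma K46 : halfTwist^[3] (e4, e6) = (e4, e6) ∧
    (∑ i ∈ Finset.range 3, phi (halfTwist^[i] (e4, e6)).1 (halfTwist^[i] (e4, e6)).2) = 1 :=
  ⟨(iterVals H46 H62 H24).1, (iterVals H46 H62 H24).2.trans (by decide)⟩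
lemma K51 : halfTwist^[3] (e5, e1) = (e5, e1) ∧
    (∑ i ∈ Finset.range 3, phi (halfTwist^[i] (e5, e1)).1 (halfTwist^[i] (e5, e1)).2) = 1 :=
  ⟨(iterVals H51 H16 H65).1, (iterVals H51 H16 H65).2.trans (by decide)⟩
lemma K53 : halfTwist^[3] (e5, e3) = (e5, e3) ∧
    (∑ i ∈ Finset.range 3, phi (halfTwist^[i] (e5, e3)).1 (halfTwist^[i] (e5, e3)).2) = 1 :=
  ⟨(iterVals H53 H31 H15).1, (iterVals H53 H31 H15).2.trans (by decide)⟩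
lemma K54 : halfTwist^[3] (e5, e4) = (e5, e4) ∧
    (∑ i ∈ Finset.range 3, phi (halfTwist^[i] (e5, e4)).1 (halfTwist^[i] (e5, e4)).2) = 1 :=
  ⟨(iterVals H54 H43 H35).1, (iterVals H54 H43 H35).2.trans (by decide)⟩
lemma K56 : halfTwist^[3] (e5, e6) = (e5, e6) ∧
    (∑ i ∈ Finset.range 3, phi (halfTwist^[i] (e5, e6)).1 (halfTwist^[i] (e5, e6)).2) = 1 :=
  ⟨(iterVals H56 H64 H45).1, (iterVals H56 H64 H45).2.trans (by decide)⟩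
lemma K61 : halfTwist^[3] (e6, e1) = (e6, e1) ∧
    (∑ i ∈ Finset.range 3, phi (halfTwist^[i] (e6, e1)).1 (halfTwist^[i] (e6, e1)).2) = 1 :=
  ⟨(iterVals H61 H12 H26).1, (iterVals H61 H12 H26).2.trans (by decide)⟩
lemma K62 : halfTwist^[3] (e6, e2) = (e6, e2) ∧
    (∑ i ∈ Finset.range 3, phi (halfTwist^[i] (e6, e2)).1 (halfTwist^[i] (e6, e2)).2) = 1 :=
  ⟨(iterVals H62 H24 H46).1, (iterVals H62 H24 H46).2.trans (by decide)⟩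
lemma K64 : halfTwist^[3] (e6, e4) = (e6, e4) ∧
    (∑ i ∈ Finset.range 3, phi (halfTwist^[i] (e6, e4)).1 (halfTwist^[i] (e6, e4)).2) = 1 :=
  ⟨(iterVals H64 H45 H56).1, (iterVals H64 H45 H56).2.trans (by decide)⟩
lemma K65 : halfTwist^[3] (e6, e5) = (e6, e5) ∧
    (∑ i ∈ Finset.range 3, phi (halfTwist^[i] (e6, e5)).1 (halfTwist^[i] (e6, e5)).2) = 1 :=
  ⟨(iterVals H65 H51 H16).1, (iterVals H65 H51 H16).2.trans (by decide)⟩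

lemma key (a b : Equiv.Perm (Fin 4)) (ha : IsFourCycle a) (hb : IsFourCycle b)
    (hba : b ≠ a) (hbi : b ≠ a⁻¹) :
    halfTwist^[3] (a, b) = (a, b) ∧
    (∑ i ∈ Finset.range 3, phi (halfTwist^[i] (a, b)).1 (halfTwist^[i] (a, b)).2) = 1 := by
  rcases (four_iff a).mp ha with rfl|rfl|rfl|rfl|rfl|rfl <;>
    rcases (four_iff b).mp hb with rfl|rfl|rfl|rfl|rfl|rfl
  · exact absurd rfl hba
  · exact K12
  · exact K13
  · exact absurd (by decide) hbi
  · exact K15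
  · exact K16
  · exact K21
  · exact absurd rfl hba
  · exact K23
  · exact K24
  · exact absurd (by decide) hbi
  · exact K26
  · exact K31
  · exact K32
  · exact absurd rfl hba
  · exact K34
  · exact K35
  · exact absurd (by decide) hbi
  · exact absurd (by decide) hbi
  · exact K42
  · exact K43
  · exact absurd rfl hba
  · exact K45
  · exact K46
  · exact K51
  · exact absurd (by decide) hbi
  · exact K53
  · exact K54
  · exact absurd rfl hba
  · exact K56
  · exact K61
  · exact K62
  · exact absurd (by decide) hbi
  · exact K64
  · exact K65
  · exact absurd rfl hba

/-- Let `l ≡ 3 (mod 6)` and let `a, b` be 4-cycles in `S₄` with `b ≠ a` and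
`b ≠ a⁻¹`.  Then the total weight of the corresponding `Q6`-coloring of the
`(2,l)`-torus braid, namely the sum over `i = 0, 1, …, l−1` of `φ` applied to the
`i`-th iterate of the half-twist map starting from `(a,b)`, equals `l + 2` in
`ℤ/4ℤ`. -/
theorem stmt_10 (l : ℕ) (hl : l % 6 = 3) (a b : Equiv.Perm (Fin 4))
    (ha : IsFourCycle a) (hb : IsFourCycle b) (hba : b ≠ a) (hbi : b ≠ a⁻¹) :
    ∑ i ∈ Finset.range l, phi (halfTwist^[i] (a, b)).1 (halfTwist^[i] (a, b)).2
      = (l : ZMod 4) + 2 := by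
  obtain ⟨h3, hs3⟩ := key a b ha hb hba hbi
  have fix : ∀ m : ℕ, halfTwist^[3*m] (a, b) = (a, b) := by
    intro m
    induction m with
    | zero => rfl
    | succ m ih =>
        rw [Nat.mul_succ, Function.iterate_add_apply, h3, ih]
  have gen : ∀ m : ℕ, ∑ i ∈ Finset.range (3*m),
      phi (halfTwist^[i] (a, b)).1 (halfTwist^[i] (a, b)).2 = (m : ZMod 4) := by
    intro m
    induction m with
    | zero => simp
    | succ m ih =>
        rw [Nat.mul_succ, Finset.sum_range_add, ih]
        have : ∀ i ∈ Finset.range 3,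
            phi (halfTwist^[3*m+i] (a, b)).1 (halfTwist^[3*m+i] (a, b)).2
              = phi (halfTwist^[i] (a, b)).1 (halfTwist^[i] (a, b)).2 := by
          intro i _
          rw [add_comm, Function.iterate_add_apply, fix]
        rw [Finset.sum_congr rfl this, hs3]
        push_cast
        ring
  obtain ⟨k, hk⟩ : ∃ k, l = 3*(2*k+1) := ⟨l/6, by omega⟩
  rw [hk, gen (2*k+1)]
  have h4 : (4 : ZMod 4) = 0 := rfl
  push_cast
  linear_combination (-(k : ZMod 4) - 1) * h4
end
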